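/- arXiv:2106.07950 — 3 statements merged into one kernel-verified Lean document; each statement's English description precedes it below -/
import Mathlib

section
/- Let β₁ ≠ β₂ be real numbers and for a direction vector v = (1,β) and b > 0 define Λ^v(b) = {(m,n) ∈ ℤ² : βm − b/2 ≤ n ≤ βm + b/2}. Then for every b > 4(⌊|β₁ − β₂|⌋ + 1), every element of ℤ² can be written as the sum of an element of Λ^{(1,β₁)}(b) and an element of Λ^{(1,β₂)}(b). -/
/-- The directional strip `Λ^{(1,β)}(b) = {(m,n) ∈ ℤ² : βm − b/2 ≤ n ≤ βm + b/2}`. -/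
def dirLambda (β b : ℝ) : Set (ℤ × ℤ) :=
  {p : ℤ × ℤ | β * (p.1 : ℝ) - b / 2 ≤ (p.2 : ℝ) ∧ (p.2 : ℝ) ≤ β * (p.1 : ℝ) + b / 2}

theorem stmt0 (β₁ β₂ : ℝ) (hβ : β₁ ≠ β₂) (b : ℝ)
    (hb : b > 4 * ((⌊|β₁ - β₂|⌋ : ℝ) + 1)) (p : ℤ × ℤ) :
    ∃ q ∈ dirLambda β₁ b, ∃ r ∈ dirLambda β₂ b, p = q + r := by
  obtain ⟨m, n⟩ := p
  set δ : ℝ := β₁ - β₂ with hδdef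
  have hδ : δ ≠ 0 := sub_ne_zero.mpr hβ
  have hδabs : |δ| < (⌊|δ|⌋ : ℝ) + 1 := Int.lt_floor_add_one _
  have hfl : (0:ℝ) ≤ (⌊|δ|⌋ : ℝ) := by
    exact_mod_cast Int.floor_nonneg.mpr (abs_nonneg δ)
  have hb4 : (4:ℝ) < b := by linarith
  have hbδ : 4 * |δ| < b := by linarith
  set t : ℝ := (n : ℝ) - β₂ * m with htdef
  set m₁ : ℤ := round (t / δ) with hm₁
  set n₁ : ℤ := round (β₁ * m₁) with hn₁
  have h1 : |β₁ * (m₁ : ℝ) - (n₁ : ℝ)| ≤ 1 / 2 := by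
    rw [hn₁]; exact abs_sub_round _
  have h2 : |δ * (m₁ : ℝ) - t| ≤ |δ| / 2 := by
    have : δ * (m₁ : ℝ) - t = δ * ((m₁ : ℝ) - t / δ) := by
      field_simp
    rw [this, abs_mul]
    have : |(m₁ : ℝ) - t / δ| ≤ 1 / 2 := by
      rw [hm₁, abs_sub_comm]; exact abs_sub_round _
    have hpos : (0:ℝ) ≤ |δ| := abs_nonneg _
    nlinarith
  have h1' := abs_le.mp h1
  have h2' := abs_le.mp h2
  have habs : |δ| ≥ 0 := abs_nonneg _
  refine ⟨(m₁, n₁), ⟨?_, ?_⟩, (m - m₁, n - n₁), ⟨?_, ?_⟩, ?_⟩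
  · simp only []; linarith [h1'.1, h1'.2]
  · simp only []; linarith [h1'.1, h1'.2]
  · simp only [Prod.fst, Prod.snd]
    push_cast
    have : δ = β₁ - β₂ := hδdef
    nlinarith [h1'.1, h1'.2, h2'.1, h2'.2]
  · simp only [Prod.fst, Prod.snd]
    push_cast
    nlinarith [h1'.1, h1'.2, h2'.1, h2'.2]
  · simp [Prod.ext_iff]
end

section
/- Let (X, 𝓑_X, μ) and (Y, 𝓑_Y, ν) be probability spaces with sub-σ-algebras 𝓧 ⊆ 𝓑_X and 𝓨 ⊆ 𝓑_Y. Then for any f ∈ L²(X, 𝓑_X, μ) and g ∈ L²(Y, 𝓑_Y, ν), the conditional expectation of (x,y) ↦ f(x)g(y) with respect to the product σ-algebra 𝓧 × 𝓨 equals (x,y) ↦ E[f|𝓧](x)·E[g|𝓨](y), μ×ν-almost everywhere. -/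
open MeasureTheory

theorem stmt6 {X Y : Type*} (m₁ : MeasurableSpace X) (m₂ : MeasurableSpace Y)
    [mX : MeasurableSpace X] [mY : MeasurableSpace Y]
    (μ : Measure X) (ν : Measure Y) [IsProbabilityMeasure μ] [IsProbabilityMeasure ν]
    (hm₁ : m₁ ≤ mX) (hm₂ : m₂ ≤ mY)
    (f : X → ℝ) (g : Y → ℝ) (hf : MemLp f 2 μ) (hg : MemLp g 2 ν) :
    (μ.prod ν)[(fun p : X × Y => f p.1 * g p.2) | m₁.prod m₂] =ᵐ[μ.prod ν]
      fun p : X × Y => (μ[f|m₁]) p.1 * (ν[g|m₂]) p.2 := by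
  have hm : m₁.prod m₂ ≤ mX.prod mY :=
    sup_le_sup (MeasurableSpace.comap_mono hm₁) (MeasurableSpace.comap_mono hm₂)
  have hfi : Integrable f μ := hf.integrable one_le_two
  have hgi : Integrable g ν := hg.integrable one_le_two
  have hEf : Integrable (μ[f|m₁]) μ := integrable_condExp
  have hEg : Integrable (ν[g|m₂]) ν := integrable_condExp
  have hEf_sm : StronglyMeasurable[m₁] (μ[f|m₁]) := stronglyMeasurable_condExp
  have hEg_sm : StronglyMeasurable[m₂] (ν[g|m₂]) := stronglyMeasurable_condExp
  have hF : Integrable (fun p : X × Y => f p.1 * g p.2) (μ.prod ν) := hfi.mul_prod hgi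
  have hC : Integrable (fun p : X × Y => (μ[f|m₁]) p.1 * (ν[g|m₂]) p.2) (μ.prod ν) :=
    hEf.mul_prod hEg
  refine (ae_eq_condExp_of_forall_setIntegral_eq hm hF (fun s _ _ => hC.integrableOn)
    (fun s hs _ => ?_) ?_).symm
  swap
  · exact StronglyMeasurable.aestronglyMeasurable
      ((hEf_sm.comp_measurable (@measurable_fst X Y m₁ m₂)).mul
        (hEg_sm.comp_measurable (@measurable_snd X Y m₁ m₂)))
  have hs' : MeasurableSet s := hm s hs
  have hslice : ∀ x : X, MeasurableSet[m₂] (Prod.mk x ⁻¹' s) := fun x =>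
    @measurable_prodMk_left X Y m₁ m₂ x s hs
  set h' : X → ℝ := fun x => ∫ y in Prod.mk x ⁻¹' s, (ν[g|m₂]) y ∂ν with hh'_def
  -- h' is strongly measurable w.r.t. m₁
  have hh'_sm : StronglyMeasurable[m₁] h' := by
    have h1 : StronglyMeasurable[m₁.prod m₂] (s.indicator (fun p : X × Y => (ν[g|m₂]) p.2)) :=
      (hEg_sm.comp_measurable (@measurable_snd X Y m₁ m₂)).indicator hs
    have h2 := @MeasureTheory.StronglyMeasurable.integral_prod_right' X Y ℝ m₁ m₂
      (ν.trim hm₂) _ _ _ _ h1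
    have h3 : h' = fun x => ∫ y, (s.indicator (fun p : X × Y => (ν[g|m₂]) p.2)) (x, y)
        ∂(ν.trim hm₂) := by
      funext x
      show (∫ y in Prod.mk x ⁻¹' s, (ν[g|m₂]) y ∂ν) = _
      rw [setIntegral_trim hm₂ hEg_sm (hslice x),
        ← @MeasureTheory.integral_indicator Y ℝ m₂ _ _ (fun y => (ν[g|m₂]) y)
          (Prod.mk x ⁻¹' s) (ν.trim hm₂) (hslice x)]
      congr 1
    rw [h3]
    exact h2
  -- integrability of h' * f and h' * condexp f
  have key_int : ∀ (φ : X → ℝ), Integrable φ μ →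
      Integrable (fun x => h' x * φ x) μ := by
    intro φ hφ
    have h0 : Integrable (Set.indicator s (fun p : X × Y => φ p.1 * (ν[g|m₂]) p.2)) (μ.prod ν) :=
      (hφ.mul_prod hEg).indicator hs'
    have h1 := h0.integral_prod_left
    refine h1.congr (Filter.Eventually.of_forall fun x => ?_)
    beta_reduce
    calc ∫ y, (Set.indicator s (fun p : X × Y => φ p.1 * (ν[g|m₂]) p.2)) (x, y) ∂ν
        = ∫ y, (Prod.mk x ⁻¹' s).indicator (fun y => φ x * (ν[g|m₂]) y) y ∂ν := by congr 1
      _ = ∫ y in Prod.mk x ⁻¹' s, φ x * (ν[g|m₂]) y ∂ν :=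
          integral_indicator (hm₂ _ (hslice x))
      _ = φ x * ∫ y in Prod.mk x ⁻¹' s, (ν[g|m₂]) y ∂ν := integral_const_mul _ _
      _ = h' x * φ x := mul_comm _ _
  -- reduce both set integrals to integrals of h' * (·)
  have key_eq : ∀ (φ : X → ℝ), Integrable φ μ →
      ∫ p in s, φ p.1 * (ν[g|m₂]) p.2 ∂(μ.prod ν) = ∫ x, h' x * φ x ∂μ := by
    intro φ hφ
    have h0 : Integrable (Set.indicator s (fun p : X × Y => φ p.1 * (ν[g|m₂]) p.2)) (μ.prod ν) :=
      (hφ.mul_prod hEg).indicator hs'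
    rw [← integral_indicator hs', integral_prod _ h0]
    refine integral_congr_ae (Filter.Eventually.of_forall fun x => ?_)
    beta_reduce
    calc ∫ y, (Set.indicator s (fun p : X × Y => φ p.1 * (ν[g|m₂]) p.2)) (x, y) ∂ν
        = ∫ y, (Prod.mk x ⁻¹' s).indicator (fun y => φ x * (ν[g|m₂]) y) y ∂ν := by congr 1
      _ = ∫ y in Prod.mk x ⁻¹' s, φ x * (ν[g|m₂]) y ∂ν :=
          integral_indicator (hm₂ _ (hslice x))
      _ = φ x * ∫ y in Prod.mk x ⁻¹' s, (ν[g|m₂]) y ∂ν := integral_const_mul _ _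
      _ = h' x * φ x := mul_comm _ _
  -- LHS with f: first replace g by its conditional expectation in inner integrals
  have hFs : ∫ p in s, f p.1 * g p.2 ∂(μ.prod ν) = ∫ x, h' x * f x ∂μ := by
    rw [← integral_indicator hs', integral_prod _ (hF.indicator hs')]
    refine integral_congr_ae (Filter.Eventually.of_forall fun x => ?_)
    beta_reduce
    calc ∫ y, (Set.indicator s (fun p : X × Y => f p.1 * g p.2)) (x, y) ∂ν
        = ∫ y, (Prod.mk x ⁻¹' s).indicator (fun y => f x * g y) y ∂ν := by congr 1
      _ = ∫ y in Prod.mk x ⁻¹' s, f x * g y ∂ν :=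
          integral_indicator (hm₂ _ (hslice x))
      _ = f x * ∫ y in Prod.mk x ⁻¹' s, g y ∂ν := integral_const_mul _ _
      _ = f x * ∫ y in Prod.mk x ⁻¹' s, (ν[g|m₂]) y ∂ν := by
          rw [setIntegral_condExp hm₂ hgi (hslice x)]
      _ = h' x * f x := mul_comm _ _
  -- pull-out property for the first factor
  have hpull : μ[fun x => h' x * f x|m₁] =ᵐ[μ] fun x => h' x * (μ[f|m₁]) x := by
    have := condExp_mul_of_stronglyMeasurable_left hh'_sm
      (by simpa [Pi.mul_def] using key_int f hfi) hfi
    simpa [Pi.mul_def] using this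
  have hBf : ∫ x, h' x * f x ∂μ = ∫ x, h' x * (μ[f|m₁]) x ∂μ := by
    rw [← integral_condExp hm₁ (f := fun x => h' x * f x)]
    exact integral_congr_ae hpull
  calc ∫ p in s, (μ[f|m₁]) p.1 * (ν[g|m₂]) p.2 ∂(μ.prod ν)
      = ∫ x, h' x * (μ[f|m₁]) x ∂μ := key_eq _ hEf
    _ = ∫ x, h' x * f x ∂μ := hBf.symm
    _ = ∫ p in s, f p.1 * g p.2 ∂(μ.prod ν) := hFs.symm
end

section
/- Let (X, 𝓑, μ, T) be a measure-preserving ℤ²-system, v = (1,β) a direction, b > 0. If there exists a set B ∈ 𝓑 with 0 < μ(B) < 1 such that the closure of {1_B ∘ T^{(m,n)} : (m,n) ∈ Λ^v(b)} is compact in L²(μ), then there exist a set C ∈ 𝓑 and ε > 0 such that limsup_{k→∞} (1/#Λ_k^v(b)) Σ_{(m,n)∈Λ_k^v(b)} |μ(T^{-(m,n)}B ∩ C) − μ(B)μ(C)| ≥ ε. -/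
open MeasureTheory

/-- `Λ_k^{(1,β)}(b) = Λ^{(1,β)}(b) ∩ ([0,k−1] × ℤ)`. -/
def dirLambdaK (β b : ℝ) (k : ℕ) : Set (ℤ × ℤ) :=
  dirLambda β b ∩ {p : ℤ × ℤ | 0 ≤ p.1 ∧ p.1 ≤ (k : ℤ) - 1}

/-- The directional orbit `{1_B ∘ T^w : w ∈ Λ}` of the indicator of `B`, as a subset of `L²(μ)`. -/
def dirOrbit {X : Type*} [mX : MeasurableSpace X] (μ : Measure X) [IsFiniteMeasure μ]
    (T : ℤ × ℤ → X → X) (hT : ∀ w, MeasurePreserving (T w) μ μ) (Λ : Set (ℤ × ℤ))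
    {B : Set X} (hB : MeasurableSet B) : Set (Lp ℝ 2 μ) :=
  {g : Lp ℝ 2 μ | ∃ w ∈ Λ, g = MemLp.toLp _
    (memLp_indicator_const 2 (hB.preimage (hT w).measurable) (1 : ℝ)
      (Or.inr (measure_ne_top μ _)))}

open scoped RealInnerProductSpace
set_option maxHeartbeats 1000000

lemma inner_ind {X : Type*} [MeasurableSpace X] (μ : Measure X) [IsProbabilityMeasure μ]
    {A C : Set X} (hA : MeasurableSet A) (hC : MeasurableSet C) :
    ⟪indicatorConstLp 2 hA (measure_ne_top μ A) (1 : ℝ),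
      indicatorConstLp 2 hC (measure_ne_top μ C) (1 : ℝ)⟫ = (μ (A ∩ C)).toReal := by
  rw [L2.inner_indicatorConstLp_eq_setIntegral_inner]
  have h1 : ∀ᵐ x ∂(μ.restrict A),
      (inner ℝ (1 : ℝ) ((indicatorConstLp 2 hC (measure_ne_top μ C) (1 : ℝ)) x) : ℝ)
      = C.indicator (fun _ => (1:ℝ)) x := by
    filter_upwards [ae_restrict_of_ae (indicatorConstLp_coeFn (p := 2) (hs := hC)
      (hμs := measure_ne_top μ C) (c := (1:ℝ)))] with x hx
    simp [hx, RCLike.inner_apply]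
  rw [integral_congr_ae h1, setIntegral_indicator hC, setIntegral_const, Set.inter_comm]
  simp [measureReal_def]

lemma dirLambdaK_finite (β b : ℝ) (k : ℕ) : (dirLambdaK β b k).Finite := by
  have : dirLambdaK β b k ⊆ (Set.Icc (0:ℤ) ((k:ℤ)-1)) ×ˢ
      (Set.Icc (-⌈|β| * k + b⌉) ⌈|β| * k + b⌉) := by
    rintro ⟨m, n⟩ ⟨⟨h1, h2⟩, h3, h4⟩
    have hm : |(m:ℝ)| ≤ (k:ℝ) := by
      rw [abs_of_nonneg (by exact_mod_cast h3)]
      have : (m:ℝ) ≤ (k:ℝ) - 1 := by exact_mod_cast h4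
      linarith
    have hbm : |β * m| ≤ |β| * k := by
      rw [abs_mul]; exact mul_le_mul_of_nonneg_left hm (abs_nonneg β)
    refine ⟨⟨h3, h4⟩, ?_, ?_⟩
    · have h5 : -(|β| * k + b) ≤ (n:ℝ) := by
        simp only at h1 h2
        nlinarith [neg_abs_le (β * (m:ℝ)), le_abs_self (β * (m:ℝ))]
      have h6 : (-⌈|β| * k + b⌉ : ℝ) ≤ (n:ℝ) := by
        have := Int.le_ceil (|β| * k + b); linarith
      exact_mod_cast h6
    · have h5 : (n:ℝ) ≤ |β| * k + b := by
        simp only at h1 h2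
        nlinarith [le_abs_self (β * (m:ℝ)), neg_abs_le (β * (m:ℝ))]
      have h6 : (n:ℝ) ≤ (⌈|β| * k + b⌉ : ℝ) := le_trans h5 (Int.le_ceil _)
      exact_mod_cast h6
  exact Set.Finite.subset ((Set.finite_Icc _ _).prod (Set.finite_Icc _ _)) this

lemma zero_mem_dirLambdaK (β b : ℝ) (hb : 0 < b) (k : ℕ) (hk : 1 ≤ k) :
    ((0,0) : ℤ × ℤ) ∈ dirLambdaK β b k := by
  refine ⟨⟨?_, ?_⟩, le_refl _, ?_⟩ <;> simp <;> [linarith; linarith; omega]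

theorem stmt9 {X : Type*} [mX : MeasurableSpace X] (μ : Measure X) [IsProbabilityMeasure μ]
    (T : ℤ × ℤ → X → X) (hT : ∀ w, MeasurePreserving (T w) μ μ)
    (hTadd : ∀ v w : ℤ × ℤ, T (v + w) = T v ∘ T w)
    (β b : ℝ) (hb : 0 < b)
    (B : Set X) (hB : MeasurableSet B) (hB0 : 0 < μ B) (hB1 : μ B < 1)
    (hcpt : IsCompact (closure (dirOrbit μ T hT (dirLambda β b) hB))) :
    ∃ C : Set X, MeasurableSet C ∧ ∃ ε > (0 : ℝ),
      ε ≤ Filter.limsup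
        (fun k : ℕ =>
          (∑ᶠ w ∈ dirLambdaK β b k,
            |(μ (T w ⁻¹' B ∩ C)).toReal - (μ B).toReal * (μ C).toReal|) /
          ((dirLambdaK β b k).ncard : ℝ))
        Filter.atTop := by
  classical
  set a : ℝ := (μ B).toReal with ha_def
  have ha0 : 0 < a := ENNReal.toReal_pos hB0.ne' (measure_ne_top μ B)
  have ha1 : a < 1 := by
    have := ENNReal.toReal_mono ENNReal.one_ne_top hB1.le
    simp only [ENNReal.toReal_one] at this
    rcases lt_or_eq_of_le this with h | h
    · exact h
    · exfalso
      have : μ B = 1 := by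
        have h1 : μ B ≠ ⊤ := measure_ne_top μ B
        apply (ENNReal.toReal_eq_one_iff _).mp h
      exact absurd this hB1.ne
  set δ : ℝ := (a - a^2) / 2 with hδ_def
  have hδ : 0 < δ := by nlinarith
  -- the orbit map
  set F : ℤ × ℤ → Lp ℝ 2 μ := fun w =>
    indicatorConstLp 2 (hB.preimage (hT w).measurable) (measure_ne_top μ _) (1 : ℝ) with hF_def
  have hFO : ∀ w ∈ dirLambda β b, F w ∈ dirOrbit μ T hT (dirLambda β b) hB :=
    fun w hw => ⟨w, hw, rfl⟩
  -- covering by finitely many δ-balls centered in the orbit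
  have hTB : TotallyBounded (dirOrbit μ T hT (dirLambda β b) hB) :=
    hcpt.totallyBounded.subset subset_closure
  obtain ⟨t, htO, htfin, hcover⟩ := Metric.finite_approx_of_totallyBounded hTB δ hδ
  have hzeroΛ : ((0,0) : ℤ × ℤ) ∈ dirLambda β b := by
    constructor <;> simp <;> linarith
  have hcw : ∀ w ∈ dirLambda β b, ∃ y, y ∈ t ∧ dist (F w) y < δ := by
    intro w hw
    have := hcover (hFO w hw)
    simpa [Metric.mem_ball] using this
  set c : ℤ × ℤ → Lp ℝ 2 μ := fun w =>
    if h : ∃ y, y ∈ t ∧ dist (F w) y < δ then h.choose else F w with hc_def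
  have hc : ∀ w ∈ dirLambda β b, c w ∈ t ∧ dist (F w) (c w) < δ := by
    intro w hw
    have h := hcw w hw
    simp only [hc_def, dif_pos h]
    exact h.choose_spec
  set tf : Finset (Lp ℝ 2 μ) := htfin.toFinset with htf_def
  have htf_ne : tf.Nonempty := by
    obtain ⟨y, hy, -⟩ := hcw _ hzeroΛ
    exact ⟨y, htfin.mem_toFinset.mpr hy⟩
  -- finset versions of dirLambdaK
  set Sk : ℕ → Finset (ℤ × ℤ) := fun k => (dirLambdaK_finite β b k).toFinset with hSk_def
  have hSk_mem : ∀ k w, w ∈ Sk k ↔ w ∈ dirLambdaK β b k := by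
    intro k w; simp [hSk_def, (dirLambdaK_finite β b k).mem_toFinset]
  -- pigeonhole for each k
  have hP : ∀ k : ℕ, ∃ y ∈ tf,
      (Sk k).card ≤ tf.card * ((Sk k).filter (fun w => c w = y)).card := by
    intro k
    have hmaps : ∀ w ∈ Sk k, c w ∈ tf := by
      intro w hw
      have hwΛ : w ∈ dirLambda β b := ((hSk_mem k w).mp hw).1
      exact htfin.mem_toFinset.mpr (hc w hwΛ).1
    have hsum : (Sk k).card = ∑ y ∈ tf, ((Sk k).filter (fun w => c w = y)).card :=
      Finset.card_eq_sum_card_fiberwise hmaps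
    have : ∑ _y ∈ tf, (Sk k).card ≤ ∑ y ∈ tf, tf.card * ((Sk k).filter (fun w => c w = y)).card := by
      rw [← Finset.mul_sum, Finset.sum_const, smul_eq_mul, ← hsum]
    exact Finset.exists_le_of_sum_le htf_ne this
  -- pigeonhole over k : some y works frequently
  have hfreq : ∃ y ∈ tf, ∃ᶠ k in Filter.atTop,
      (Sk k).card ≤ tf.card * ((Sk k).filter (fun w => c w = y)).card := by
    by_contra h
    push_neg at h
    simp only [← not_le] at h
    have hev : ∀ᶠ k in Filter.atTop, ∀ y ∈ tf,
        ¬ (Sk k).card ≤ tf.card * ((Sk k).filter (fun w => c w = y)).card :=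
      (Filter.eventually_all_finset tf).mpr h
    obtain ⟨k, hk⟩ := hev.exists
    obtain ⟨y, hy, hyk⟩ := hP k
    exact hk y hy hyk
  obtain ⟨y, hyt, hyfreq⟩ := hfreq
  -- y is an orbit point
  obtain ⟨wst, hwst, hy_eq⟩ := htO (htfin.mem_toFinset.mp hyt)
  have hyF : y = F wst := hy_eq
  set C : Set X := T wst ⁻¹' B with hC_def
  have hCmeas : MeasurableSet C := hB.preimage (hT wst).measurable
  have hμC : μ C = μ B := (hT wst).measure_preimage hB.nullMeasurableSet
  -- per-term lower bound
  have hterm : ∀ w ∈ dirLambda β b, dist (F w) y < δ →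
      δ ≤ |(μ (T w ⁻¹' B ∩ C)).toReal - a * (μ C).toReal| := by
    intro w hw hdist
    have hAmeas : MeasurableSet (T w ⁻¹' B) := hB.preimage (hT w).measurable
    have hμA : μ (T w ⁻¹' B) = μ B := (hT w).measure_preimage hB.nullMeasurableSet
    have hself : ⟪F w, F w⟫ = a := by
      rw [hF_def]; rw [inner_ind μ hAmeas hAmeas, Set.inter_self, hμA]
    have hnorm2 : ‖F w‖^2 = a := by rw [← real_inner_self_eq_norm_sq, hself]
    have hnorm : ‖F w‖ ≤ 1 := by
      nlinarith [norm_nonneg (F w)]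
    have hinnerC : ⟪F w, y⟫ = (μ (T w ⁻¹' B ∩ C)).toReal := by
      rw [hyF, hF_def]; exact inner_ind μ hAmeas hCmeas
    have hcs : |⟪F w, F w - y⟫| ≤ ‖F w‖ * ‖F w - y‖ := abs_real_inner_le_norm _ _
    have hdn : ‖F w - y‖ < δ := by rwa [← dist_eq_norm]
    have hlow : a - δ ≤ ⟪F w, y⟫ := by
      have hexp : ⟪F w, y⟫ = ⟪F w, F w⟫ - ⟪F w, F w - y⟫ := by
        rw [inner_sub_right]; ring
      have h1 : ⟪F w, F w - y⟫ ≤ ‖F w‖ * ‖F w - y‖ := le_trans (le_abs_self _) hcs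
      have h2 : ‖F w‖ * ‖F w - y‖ ≤ 1 * δ := by
        apply mul_le_mul hnorm hdn.le (norm_nonneg _) zero_le_one
      rw [hexp, hself]
      linarith
    have hμCr : (μ C).toReal = a := by rw [hμC]
    rw [hμCr]
    have : δ ≤ (μ (T w ⁻¹' B ∩ C)).toReal - a * a := by
      rw [← hinnerC]
      nlinarith
    exact le_trans this (le_abs_self _)
  -- boundedness of the average sequence
  have hbound : ∀ k : ℕ,
      (∑ᶠ w ∈ dirLambdaK β b k,
        |(μ (T w ⁻¹' B ∩ C)).toReal - a * (μ C).toReal|) /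
      ((dirLambdaK β b k).ncard : ℝ) ≤ 1 := by
    intro k
    have hrw : (∑ᶠ w ∈ dirLambdaK β b k,
        |(μ (T w ⁻¹' B ∩ C)).toReal - a * (μ C).toReal|)
        = ∑ w ∈ Sk k, |(μ (T w ⁻¹' B ∩ C)).toReal - a * (μ C).toReal| := by
      rw [← (dirLambdaK_finite β b k).coe_toFinset, finsum_mem_coe_finset]
    have hncard : ((dirLambdaK β b k).ncard : ℝ) = ((Sk k).card : ℝ) := by
      rw [Set.ncard_eq_toFinset_card _ (dirLambdaK_finite β b k)]
    rw [hrw, hncard]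
    rcases Nat.eq_zero_or_pos (Sk k).card with h0 | hpos
    · rw [Finset.card_eq_zero] at h0
      simp [h0]
    · have hterm1 : ∀ w ∈ Sk k,
          |(μ (T w ⁻¹' B ∩ C)).toReal - a * (μ C).toReal| ≤ 1 := by
        intro w _
        have h1 : (μ (T w ⁻¹' B ∩ C)).toReal ≤ 1 := by
          have := prob_le_one (μ := μ) (s := T w ⁻¹' B ∩ C)
          simpa using ENNReal.toReal_mono ENNReal.one_ne_top this
        have h2 : (μ C).toReal ≤ 1 := by
          have := prob_le_one (μ := μ) (s := C)
          simpa using ENNReal.toReal_mono ENNReal.one_ne_top this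
        have h3 : 0 ≤ (μ (T w ⁻¹' B ∩ C)).toReal := ENNReal.toReal_nonneg
        have h4 : 0 ≤ (μ C).toReal := ENNReal.toReal_nonneg
        rw [abs_le]
        constructor <;> nlinarith
      have hsum : ∑ w ∈ Sk k, |(μ (T w ⁻¹' B ∩ C)).toReal - a * (μ C).toReal|
          ≤ ((Sk k).card : ℝ) * 1 := by
        calc ∑ w ∈ Sk k, |(μ (T w ⁻¹' B ∩ C)).toReal - a * (μ C).toReal|
            ≤ ∑ _w ∈ Sk k, (1:ℝ) := Finset.sum_le_sum hterm1
          _ = ((Sk k).card : ℝ) * 1 := by simp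
      rw [div_le_one (by exact_mod_cast hpos)]
      simpa using hsum
  -- conclusion
  refine ⟨C, hCmeas, δ / tf.card, ?_, ?_⟩
  · apply div_pos hδ
    exact_mod_cast htf_ne.card_pos
  · apply Filter.le_limsup_of_frequently_le
    · have hev1 : ∀ᶠ k : ℕ in Filter.atTop, 1 ≤ k := Filter.eventually_ge_atTop 1
      refine (hyfreq.and_eventually hev1).mono ?_
      rintro k ⟨hcard, hk1⟩
      -- rewrite finsum / ncard
      have hrw : (∑ᶠ w ∈ dirLambdaK β b k,
          |(μ (T w ⁻¹' B ∩ C)).toReal - a * (μ C).toReal|)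
          = ∑ w ∈ Sk k, |(μ (T w ⁻¹' B ∩ C)).toReal - a * (μ C).toReal| := by
        rw [← (dirLambdaK_finite β b k).coe_toFinset, finsum_mem_coe_finset]
      have hncard : ((dirLambdaK β b k).ncard : ℝ) = ((Sk k).card : ℝ) := by
        rw [Set.ncard_eq_toFinset_card _ (dirLambdaK_finite β b k)]
      rw [hrw, hncard]
      set fib : Finset (ℤ × ℤ) := (Sk k).filter (fun w => c w = y) with hfib_def
      have hfib_term : ∀ w ∈ fib,
          δ ≤ |(μ (T w ⁻¹' B ∩ C)).toReal - a * (μ C).toReal| := by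
        intro w hw
        rw [hfib_def, Finset.mem_filter] at hw
        obtain ⟨hwS, hwc⟩ := hw
        have hwΛ : w ∈ dirLambda β b := ((hSk_mem k w).mp hwS).1
        have hd := (hc w hwΛ).2
        rw [hwc] at hd
        exact hterm w hwΛ hd
      have hsum_ge : (fib.card : ℝ) * δ ≤
          ∑ w ∈ Sk k, |(μ (T w ⁻¹' B ∩ C)).toReal - a * (μ C).toReal| := by
        calc (fib.card : ℝ) * δ = ∑ _w ∈ fib, δ := by simp [mul_comm]
          _ ≤ ∑ w ∈ fib, |(μ (T w ⁻¹' B ∩ C)).toReal - a * (μ C).toReal| :=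
              Finset.sum_le_sum hfib_term
          _ ≤ ∑ w ∈ Sk k, |(μ (T w ⁻¹' B ∩ C)).toReal - a * (μ C).toReal| := by
              apply Finset.sum_le_sum_of_subset_of_nonneg (Finset.filter_subset _ _)
              intro w _ _; exact abs_nonneg _
      have hSkpos : 0 < (Sk k).card := by
        rw [Finset.card_pos]
        exact ⟨(0,0), (hSk_mem k _).mpr (zero_mem_dirLambdaK β b hb k hk1)⟩
      have hfibpos : 0 < fib.card := by
        by_contra h
        push_neg at h
        interval_cases h' : fib.card
        omega
      have hN : (0:ℝ) < ((Sk k).card : ℝ) := by exact_mod_cast hSkpos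
      have hM : (0:ℝ) < (tf.card : ℝ) := by exact_mod_cast htf_ne.card_pos
      rw [div_le_div_iff₀ hM hN]
      have hcardR : ((Sk k).card : ℝ) ≤ (tf.card : ℝ) * (fib.card : ℝ) := by
        exact_mod_cast hcard
      nlinarith [hsum_ge, hδ.le, hN.le, hM.le]
    · exact ⟨1, Filter.eventually_map.mpr (Filter.Eventually.of_forall hbound)⟩
end
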